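/- arXiv:0805.2377 — 3 statements merged into one kernel-verified Lean document; each statement's English description precedes it below -/
import Mathlib

section
/- (Kostant duality) For any k-algebra A and any k-coalgebra C there is a natural bijection between algebra homomorphisms A → C* and coalgebra homomorphisms C → A^o, given by sending φ : A → C* to the map c ↦ (a ↦ φ(a)(c)). -/
open TensorProduct

/-- The convolution product on the dual of a coalgebra. -/
noncomputable def conv {k C : Type*} [Field k] [AddCommGroup C] [Module k C]
    [Coalgebra k C] (f g : Module.Dual k C) : Module.Dual k C :=
  (TensorProduct.lid k k).toLinearMap ∘ₗ TensorProduct.map f g ∘ₗ Coalgebra.comul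

/-- `f ∈ A^o` : the kernel of `f` contains a two-sided ideal of finite codimension. -/
def memFiniteDual (k A : Type*) [Field k] [Ring A] [Algebra k A]
    (f : Module.Dual k A) : Prop :=
  ∃ I : Submodule k A, (∀ (a : A), ∀ x ∈ I, a * x ∈ I) ∧ (∀ (a : A), ∀ x ∈ I, x * a ∈ I) ∧
    FiniteDimensional k (A ⧸ I) ∧ ∀ x ∈ I, f x = 0

open TensorProduct

lemma conv_apply {k C : Type*} [Field k] [AddCommGroup C] [Module k C]
    [Coalgebra k C] (f g : Module.Dual k C) (c : C) :
    conv f g c = (TensorProduct.lid k k) (TensorProduct.map f g (Coalgebra.comul c)) := rfl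

lemma map_apply_comp {k A C : Type*} [Field k] [Ring A] [Algebra k A]
    [AddCommGroup C] [Module k C]
    (Ψ : C →ₗ[k] Module.Dual k A) (a b : A) :
    (TensorProduct.map (LinearMap.applyₗ a) (LinearMap.applyₗ b)) ∘ₗ
      TensorProduct.map Ψ Ψ = TensorProduct.map (Ψ.flip a) (Ψ.flip b) := by
  rw [← TensorProduct.map_comp]
  congr 1

lemma rhs_eq {k A C : Type*} [Field k] [Ring A] [Algebra k A]
    [AddCommGroup C] [Module k C] [Coalgebra k C]
    (Ψ : C →ₗ[k] Module.Dual k A) (a b : A) (c : C) :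
    ((TensorProduct.lid k k).toLinearMap ∘ₗ
      TensorProduct.map (LinearMap.applyₗ a) (LinearMap.applyₗ b) ∘ₗ
      TensorProduct.map Ψ Ψ ∘ₗ Coalgebra.comul) c = conv (Ψ.flip a) (Ψ.flip b) c := by
  simp only [conv, LinearMap.comp_apply]
  rw [← LinearMap.comp_apply (TensorProduct.map _ _) (TensorProduct.map Ψ Ψ), map_apply_comp]


lemma conv_eval {k C : Type*} [Field k] [AddCommGroup C] [Module k C]
    (f g : Module.Dual k C) (s : Finset (C × C)) :
    (TensorProduct.lid k k) (TensorProduct.map f g (∑ p ∈ s, p.1 ⊗ₜ[k] p.2)) =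
      ∑ p ∈ s, f p.1 * g p.2 := by
  simp [smul_eq_mul]

lemma memFiniteDual_of_hom {k A C : Type*} [Field k] [Ring A] [Algebra k A]
    [AddCommGroup C] [Module k C] [Coalgebra k C]
    (Φ : A →ₗ[k] Module.Dual k C)
    (hm : ∀ x y : A, Φ (x * y) = conv (Φ x) (Φ y)) (c : C) :
    memFiniteDual k A (Φ.flip c) := by
  classical
  obtain ⟨s, hs⟩ := TensorProduct.exists_finset (Coalgebra.comul (R := k) c)
  choose t ht using fun p : C × C => TensorProduct.exists_finset (Coalgebra.comul (R := k) p.2)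
  set T : Finset C := s.biUnion (fun p => (t p).image Prod.fst) with hT
  set D : Submodule k C := Submodule.span k (T : Set C) with hD
  have hDfin : FiniteDimensional k D := FiniteDimensional.span_of_finite k T.finite_toSet
  set g : A →ₗ[k] (D →ₗ[k] k) := (LinearMap.domRestrict' D).comp Φ with hg
  -- the ideal
  set I : Submodule k A :=
    { carrier := {a | ∀ x y : A, Φ (x * a * y) c = 0}
      add_mem' := by
        intro a b ha hb x y
        have : x * (a + b) * y = x * a * y + x * b * y := by noncomm_ring
        rw [this, map_add, LinearMap.add_apply, ha, hb, add_zero]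
      zero_mem' := by
        intro x y
        have : x * (0:A) * y = 0 := by noncomm_ring
        rw [this, map_zero]; rfl
      smul_mem' := by
        intro r a ha x y
        have : x * (r • a) * y = r • (x * a * y) := by
          rw [mul_smul_comm, smul_mul_assoc]
        rw [this, map_smul, LinearMap.smul_apply, ha, smul_zero] } with hI
  have hJI : LinearMap.ker g ≤ I := by
    intro a ha
    have hav : ∀ d ∈ D, Φ a d = 0 := by
      intro d hd
      have : (LinearMap.domRestrict' D) (Φ a) = 0 := ha
      simpa using congrArg (fun f => f ⟨d, hd⟩) this
    intro x y
    have h1 : Φ (x * (a * y)) c = ∑ p ∈ s, Φ x p.1 * Φ (a * y) p.2 := by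
      rw [hm, conv_apply, hs, conv_eval]
    have h2 : ∀ p ∈ s, Φ (a * y) p.2 = 0 := by
      intro p hp
      rw [hm, conv_apply, ht p, conv_eval]
      refine Finset.sum_eq_zero fun q hq => ?_
      have : q.1 ∈ D := Submodule.subset_span (by
        simp only [hT, Finset.coe_biUnion, Set.mem_iUnion, Finset.coe_image, Set.mem_image]
        exact ⟨p, hp, q, hq, rfl⟩)
      rw [hav q.1 this, zero_mul]
    rw [mul_assoc, h1, Finset.sum_congr rfl fun p hp => by rw [h2 p hp, mul_zero]]
    simp
  refine ⟨I, ?_, ?_, ?_, ?_⟩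
  · intro b a ha x y
    have : x * (b * a) * y = (x * b) * a * y := by noncomm_ring
    rw [this]; exact ha (x*b) y
  · intro b a ha x y
    have : x * (a * b) * y = x * a * (b * y) := by noncomm_ring
    rw [this]; exact ha x (b*y)
  · have h1 : FiniteDimensional k (A ⧸ LinearMap.ker g) := by
      have := LinearMap.quotKerEquivRange g
      have : FiniteDimensional k (LinearMap.range g) := inferInstance
      exact Module.Finite.equiv (LinearMap.quotKerEquivRange g).symm
    have hsurj : Function.Surjective (Submodule.mapQ (LinearMap.ker g) I LinearMap.id
        (by simpa using hJI)) := by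
      intro z
      obtain ⟨a, rfl⟩ := Submodule.mkQ_surjective I z
      exact ⟨Submodule.Quotient.mk a, rfl⟩
    exact Module.Finite.of_surjective _ hsurj
  · intro a ha
    have := ha 1 1
    simpa using this

/-- (Kostant duality) The map `φ ↦ (c ↦ (a ↦ φ(a)(c)))` is a bijection from the set of
algebra homomorphisms `A → C*` (`C*` with the convolution product and unit the counit)
onto the set of coalgebra homomorphisms `C → A^o` (`A^o` with comultiplication dual to
the multiplication of `A` and counit `f ↦ f(1)`). -/
theorem kostant_duality (k A C : Type*) [Field k] [Ring A] [Algebra k A]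
    [AddCommGroup C] [Module k C] [Coalgebra k C] :
    Set.BijOn (fun Φ : A →ₗ[k] Module.Dual k C => Φ.flip)
      {Φ : A →ₗ[k] Module.Dual k C |
        Φ 1 = Coalgebra.counit ∧ ∀ x y : A, Φ (x * y) = conv (Φ x) (Φ y)}
      {Ψ : C →ₗ[k] Module.Dual k A |
        (∀ c : C, memFiniteDual k A (Ψ c)) ∧
        (∀ c : C, Ψ c 1 = Coalgebra.counit c) ∧
        (∀ (c : C) (a b : A), Ψ c (a * b) =
          ((TensorProduct.lid k k).toLinearMap ∘ₗ
            TensorProduct.map (LinearMap.applyₗ a) (LinearMap.applyₗ b) ∘ₗ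
            TensorProduct.map Ψ Ψ ∘ₗ Coalgebra.comul) c)} := by
  constructor
  · rintro Φ ⟨h1, hm⟩
    refine ⟨fun c => memFiniteDual_of_hom Φ hm c, fun c => ?_, fun c a b => ?_⟩
    · show Φ 1 c = _
      rw [h1]
    · show Φ (a * b) c = _
      rw [rhs_eq, LinearMap.flip_flip, hm]
  constructor
  · intro Φ _ Φ' _ h
    have := congrArg LinearMap.flip h
    simpa [LinearMap.flip_flip] using this
  · rintro Ψ ⟨_, h1, hm⟩
    refine ⟨Ψ.flip, ⟨?_, ?_⟩, Ψ.flip_flip⟩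
    · ext c
      exact h1 c
    · intro x y
      ext c
      show Ψ c (x * y) = _
      rw [hm c x y, rhs_eq]
end

section
/- Every k-coalgebra is the directed union (direct limit) of its finite-dimensional subcoalgebras; in particular every element of a coalgebra is contained in a finite-dimensional subcoalgebra. -/
open TensorProduct

/-- A subspace `E` of a coalgebra `C` is a subcoalgebra if `Δ(E) ⊆ E ⊗ E`. -/
def IsSubcoalgebra {k C : Type*} [Field k] [AddCommGroup C] [Module k C] [Coalgebra k C]
    (E : Submodule k C) : Prop :=
  ∀ x ∈ E, Coalgebra.comul (R := k) x ∈ LinearMap.range (TensorProduct.map E.subtype E.subtype)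

namespace FTCAux

variable {k C : Type*} [Field k] [AddCommGroup C] [Module k C]

/-- Apply a functional to the left factor: `φ ⊗ id`, composed with `lid`. -/
noncomputable def lapp (φ : C →ₗ[k] k) (X : Type*) [AddCommGroup X] [Module k X] :
    C ⊗[k] X →ₗ[k] X :=
  (TensorProduct.lid k X).toLinearMap ∘ₗ LinearMap.rTensor X φ

@[simp] lemma lapp_tmul (φ : C →ₗ[k] k) {X : Type*} [AddCommGroup X] [Module k X]
    (c : C) (x : X) : lapp φ X (c ⊗ₜ[k] x) = φ c • x := by
  simp [lapp]

/-- Apply a functional to the right factor: `id ⊗ ψ`, composed with `rid`. -/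
noncomputable def rapp (ψ : C →ₗ[k] k) (X : Type*) [AddCommGroup X] [Module k X] :
    X ⊗[k] C →ₗ[k] X :=
  (TensorProduct.rid k X).toLinearMap ∘ₗ LinearMap.lTensor X ψ

@[simp] lemma rapp_tmul (ψ : C →ₗ[k] k) {X : Type*} [AddCommGroup X] [Module k X]
    (x : X) (c : C) : rapp ψ X (x ⊗ₜ[k] c) = ψ c • x := by
  simp [rapp]

lemma lapp_natural (φ : C →ₗ[k] k) {X Y : Type*} [AddCommGroup X] [Module k X]
    [AddCommGroup Y] [Module k Y] (f : X →ₗ[k] Y) (s : C ⊗[k] X) :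
    lapp φ Y (LinearMap.lTensor C f s) = f (lapp φ X s) := by
  induction s using TensorProduct.induction_on with
  | zero => simp
  | tmul c x => simp
  | add s t hs ht => simp [map_add, hs, ht]

lemma rapp_natural (ψ : C →ₗ[k] k) {X Y : Type*} [AddCommGroup X] [Module k X]
    [AddCommGroup Y] [Module k Y] (f : X →ₗ[k] Y) (s : X ⊗[k] C) :
    rapp ψ Y (LinearMap.rTensor C f s) = f (rapp ψ X s) := by
  induction s using TensorProduct.induction_on with
  | zero => simp
  | tmul x c => simp
  | add s t hs ht => simp [map_add, hs, ht]

/-- Reconstruction of an element of `A ⊗ X` from its coordinates, for `A` a finite-dimensional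
subspace with dual family `φ`. -/
lemma recon_left {X : Type*} [AddCommGroup X] [Module k X] {A : Submodule k C}
    {n : ℕ} {a : Fin n → C} {φ : Fin n → (C →ₗ[k] k)}
    (hrec : ∀ v ∈ A, ∑ i, φ i v • a i = v)
    {s : C ⊗[k] X} (hs : s ∈ LinearMap.range (LinearMap.rTensor X A.subtype)) :
    s = ∑ i, a i ⊗ₜ[k] lapp (φ i) X s := by
  obtain ⟨s', rfl⟩ := hs
  induction s' using TensorProduct.induction_on with
  | zero => simp
  | tmul v x =>
    simp only [LinearMap.rTensor_tmul, Submodule.coe_subtype, lapp_tmul]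
    rw [show ∑ i, a i ⊗ₜ[k] (φ i (v : C) • x) = (∑ i, φ i (v : C) • a i) ⊗ₜ[k] x by
      rw [sum_tmul]; exact Finset.sum_congr rfl fun i _ => by rw [smul_tmul, tmul_smul]]
    rw [hrec (v : C) v.2]
  | add s t hs ht =>
    rw [map_add]
    conv_lhs => rw [hs, ht]
    rw [← Finset.sum_add_distrib]
    exact Finset.sum_congr rfl fun i _ => by rw [map_add, tmul_add]

lemma recon_right {X : Type*} [AddCommGroup X] [Module k X] {B : Submodule k C}
    {m : ℕ} {b : Fin m → C} {ψ : Fin m → (C →ₗ[k] k)}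
    (hrec : ∀ v ∈ B, ∑ j, ψ j v • b j = v)
    {s : X ⊗[k] C} (hs : s ∈ LinearMap.range (LinearMap.lTensor X B.subtype)) :
    s = ∑ j, rapp (ψ j) X s ⊗ₜ[k] b j := by
  obtain ⟨s', rfl⟩ := hs
  induction s' using TensorProduct.induction_on with
  | zero => simp
  | tmul x v =>
    simp only [LinearMap.lTensor_tmul, Submodule.coe_subtype, rapp_tmul]
    rw [show ∑ j, (ψ j (v : C) • x) ⊗ₜ[k] b j = x ⊗ₜ[k] (∑ j, ψ j (v : C) • b j) by
      rw [tmul_sum]; exact Finset.sum_congr rfl fun j _ => by rw [smul_tmul, tmul_smul]]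
    rw [hrec (v : C) v.2]
  | add s t hs ht =>
    rw [map_add]
    conv_lhs => rw [hs, ht]
    rw [← Finset.sum_add_distrib]
    exact Finset.sum_congr rfl fun j _ => by rw [map_add, add_tmul]

/-- Existence of a finite "basis with dual family" for a finite-dimensional subspace. -/
lemma exists_dual_family (A : Submodule k C) [FiniteDimensional k A] :
    ∃ (n : ℕ) (a : Fin n → C) (φ : Fin n → (C →ₗ[k] k)),
      (∀ i, a i ∈ A) ∧ (∀ i i', φ i (a i') = if i' = i then 1 else 0) ∧
      (∀ v ∈ A, ∑ i, φ i v • a i = v) := by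
  obtain ⟨A', hA'⟩ := Submodule.exists_isCompl A
  set β := Module.finBasis k A with hβ
  set π := A.projectionOnto A' hA' with hπ
  refine ⟨_, fun i => (β i : C), fun i => (Finsupp.lapply i) ∘ₗ β.repr.toLinearMap ∘ₗ π,
    fun i => (β i).2, fun i i' => ?_, fun v hv => ?_⟩
  · simp only [LinearMap.comp_apply, hπ, Submodule.projectionOnto_apply_left hA' (β i')]
    simp [Module.Basis.repr_self, Finsupp.single_apply]
  · have hπv : π v = ⟨v, hv⟩ := Submodule.projectionOnto_apply_left hA' ⟨v, hv⟩
    simp only [LinearMap.comp_apply, hπv]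
    have := β.sum_repr ⟨v, hv⟩
    calc ∑ i, (Finsupp.lapply i) (β.repr.toLinearMap ⟨v, hv⟩) • (β i : C)
        = ((∑ i, β.repr ⟨v, hv⟩ i • β i : A) : C) := by
          rw [Submodule.coe_sum]; rfl
      _ = v := by rw [this]

/-- Every element of a tensor product lies in `A ⊗ C` and `C ⊗ B` for some
finite-dimensional `A`, `B`. -/
lemma exists_fd_supports (s : C ⊗[k] C) :
    ∃ (A B : Submodule k C), FiniteDimensional k A ∧ FiniteDimensional k B ∧
      s ∈ LinearMap.range (LinearMap.rTensor C A.subtype) ∧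
      s ∈ LinearMap.range (LinearMap.lTensor C B.subtype) := by
  obtain ⟨S, rfl⟩ := TensorProduct.exists_finset (R := k) s
  refine ⟨Submodule.span k (Prod.fst '' (S : Set (C × C))),
    Submodule.span k (Prod.snd '' (S : Set (C × C))),
    FiniteDimensional.span_of_finite _ ((S.finite_toSet).image _),
    FiniteDimensional.span_of_finite _ ((S.finite_toSet).image _), ?_, ?_⟩
  · exact Submodule.sum_mem _ fun p hp =>
      ⟨(⟨p.1, Submodule.subset_span ⟨p, hp, rfl⟩⟩ :
        Submodule.span k (Prod.fst '' (S : Set (C × C)))) ⊗ₜ[k] p.2, rfl⟩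
  · exact Submodule.sum_mem _ fun p hp =>
      ⟨p.1 ⊗ₜ[k] (⟨p.2, Submodule.subset_span ⟨p, hp, rfl⟩⟩ :
        Submodule.span k (Prod.snd '' (S : Set (C × C)))), rfl⟩

lemma assoc_tmul_mem (B : Submodule k C) (w : C ⊗[k] C) {b : C} (hb : b ∈ B) :
    TensorProduct.assoc k C C C (w ⊗ₜ[k] b) ∈
      LinearMap.range (LinearMap.lTensor C (LinearMap.lTensor C B.subtype)) := by
  induction w using TensorProduct.induction_on with
  | zero => rw [zero_tmul, map_zero]; exact zero_mem _
  | tmul x y =>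
    exact ⟨x ⊗ₜ[k] (y ⊗ₜ[k] ⟨b, hb⟩), by simp⟩
  | add s t hs ht =>
    rw [add_tmul, map_add]; exact add_mem hs ht

lemma lTensor_rapp_assoc (ψ : C →ₗ[k] k) (w : C ⊗[k] C) (b : C) :
    LinearMap.lTensor C (rapp ψ C) (TensorProduct.assoc k C C C (w ⊗ₜ[k] b)) = ψ b • w := by
  induction w using TensorProduct.induction_on with
  | zero => simp
  | tmul x y => simp [smul_tmul, tmul_smul]
  | add s t hs ht => rw [add_tmul, map_add, map_add, hs, ht, smul_add]

/-- membership in a `rTensor` range is stable under `lTensor` maps. -/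
lemma lTensor_mem_range_rTensor {E : Submodule k C} {X Y : Type*} [AddCommGroup X] [Module k X]
    [AddCommGroup Y] [Module k Y] (g : X →ₗ[k] Y) {s : C ⊗[k] X}
    (hs : s ∈ LinearMap.range (LinearMap.rTensor X E.subtype)) :
    LinearMap.lTensor C g s ∈ LinearMap.range (LinearMap.rTensor Y E.subtype) := by
  obtain ⟨s', rfl⟩ := hs
  refine ⟨LinearMap.lTensor E g s', ?_⟩
  rw [← LinearMap.comp_apply, ← LinearMap.comp_apply, LinearMap.rTensor_comp_lTensor,
    LinearMap.lTensor_comp_rTensor]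

/-- over a field, `(E ⊗ C) ⊓ (C ⊗ E) = E ⊗ E`. -/
lemma mem_range_map_of_mem_inter (E : Submodule k C) {s : C ⊗[k] C}
    (h1 : s ∈ LinearMap.range (LinearMap.rTensor C E.subtype))
    (h2 : s ∈ LinearMap.range (LinearMap.lTensor C E.subtype)) :
    s ∈ LinearMap.range (TensorProduct.map E.subtype E.subtype) := by
  obtain ⟨E', hE'⟩ := Submodule.exists_isCompl E
  set q : C →ₗ[k] E := E.projectionOnto E' hE' with hq
  obtain ⟨s₁, hs₁⟩ := h1
  refine ⟨LinearMap.lTensor E q s₁, ?_⟩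
  have key : TensorProduct.map E.subtype E.subtype ∘ₗ LinearMap.lTensor E q =
      LinearMap.lTensor C (E.subtype ∘ₗ q) ∘ₗ LinearMap.rTensor C E.subtype := by
    ext x y
    simp
  rw [← LinearMap.comp_apply, key, LinearMap.comp_apply, hs₁]
  obtain ⟨s₂, hs₂⟩ := h2
  rw [← hs₂, ← LinearMap.comp_apply, ← LinearMap.lTensor_comp]
  congr 1
  ext x
  simp [hq, Submodule.projectionOnto_apply_left hE']

lemma range_map_subtype_mono {E E' F F' : Submodule k C} (hE : E ≤ E') (hF : F ≤ F') :
    LinearMap.range (TensorProduct.map E.subtype F.subtype) ≤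
      LinearMap.range (TensorProduct.map E'.subtype F'.subtype) := by
  rintro s ⟨t, rfl⟩
  refine ⟨TensorProduct.map (Submodule.inclusion hE) (Submodule.inclusion hF) t, ?_⟩
  rw [← LinearMap.comp_apply, ← TensorProduct.map_comp, Submodule.subtype_comp_inclusion,
    Submodule.subtype_comp_inclusion]

lemma sum_delta_smul {M : Type*} [AddCommGroup M] [Module k M] {n : ℕ} (i : Fin n)
    (z : Fin n → M) (c : Fin n → k) (hc : ∀ i', c i' = if i' = i then 1 else 0) :
    ∑ i', c i' • z i' = z i := by
  simp [hc, ite_smul]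

end FTCAux

open Coalgebra FTCAux in
theorem exists_fd_subcoalgebra {k C : Type*} [Field k] [AddCommGroup C] [Module k C]
    [Coalgebra k C] (c : C) :
    ∃ E : Submodule k C, IsSubcoalgebra E ∧ FiniteDimensional k E ∧ c ∈ E := by
  classical
  set Δ : C →ₗ[k] C ⊗[k] C := comul (R := k) with hΔdef
  obtain ⟨A, B, hAfd, hBfd, hΔA, hΔB⟩ := exists_fd_supports (Δ c)
  obtain ⟨n, a, φ, haA, hφδ, hφrec⟩ := exists_dual_family A
  obtain ⟨m, b, ψ, hbB, hψδ, hψrec⟩ := exists_dual_family B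
  set t : C ⊗[k] (C ⊗[k] C) := LinearMap.lTensor C Δ (Δ c) with ht
  set u : Fin n → C := fun i => lapp (φ i) C (Δ c) with hu
  set v : Fin m → C := fun j => rapp (ψ j) C (Δ c) with hv
  set x : Fin n → Fin m → C := fun i j => rapp (ψ j) C (Δ (u i)) with hx
  set E := Submodule.span k (Set.range fun p : Fin n × Fin m => x p.1 p.2) with hE
  have hxE : ∀ i j, x i j ∈ E := fun i j => Submodule.subset_span ⟨(i, j), rfl⟩
  -- counit extraction lemmas
  have lapp_counit : ∀ z : C, lapp (counit (R := k)) C (Δ z) = z := by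
    intro z; simp [lapp, hΔdef]
  have rapp_counit : ∀ z : C, rapp (counit (R := k)) C (Δ z) = z := by
    intro z; simp [rapp, hΔdef]
  -- basic identities
  have hΔu_t : ∀ i, Δ (u i) = lapp (φ i) (C ⊗[k] C) t :=
    fun i => (lapp_natural (φ i) Δ (Δ c)).symm
  have ht2 : t = TensorProduct.assoc k C C C (LinearMap.rTensor C Δ (Δ c)) :=
    (Coalgebra.coassoc_apply c).symm
  have hΔc_a : Δ c = ∑ i, a i ⊗ₜ[k] u i := recon_left hφrec hΔA
  have hΔc_b : Δ c = ∑ j, v j ⊗ₜ[k] b j := recon_right hψrec hΔB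
  have ht_formA : t = ∑ i, a i ⊗ₜ[k] Δ (u i) := by
    rw [ht]
    conv_lhs => rw [hΔc_a]
    rw [map_sum]
    exact Finset.sum_congr rfl fun i _ => by rw [LinearMap.lTensor_tmul]
  have ht_memA : t ∈ LinearMap.range (LinearMap.rTensor (C ⊗[k] C) A.subtype) := by
    rw [ht_formA]
    exact Submodule.sum_mem _ fun i _ => ⟨(⟨a i, haA i⟩ : A) ⊗ₜ[k] Δ (u i), rfl⟩
  have ht_formB : t = ∑ j, TensorProduct.assoc k C C C (Δ (v j) ⊗ₜ[k] b j) := by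
    rw [ht2]
    conv_lhs => rw [hΔc_b]
    rw [map_sum, map_sum]
    exact Finset.sum_congr rfl fun j _ => by rw [LinearMap.rTensor_tmul]
  have ht_memB : t ∈ LinearMap.range (LinearMap.lTensor C (LinearMap.lTensor C B.subtype)) := by
    rw [ht_formB]
    exact Submodule.sum_mem _ fun j _ => assoc_tmul_mem B (Δ (v j)) (hbB j)
  have hΔu_memB : ∀ i, Δ (u i) ∈ LinearMap.range (LinearMap.lTensor C B.subtype) := by
    intro i
    obtain ⟨s₀, hs₀⟩ := ht_memB
    rw [hΔu_t i, ← hs₀, lapp_natural]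
    exact ⟨_, rfl⟩
  have hΔu_form : ∀ i, Δ (u i) = ∑ j, x i j ⊗ₜ[k] b j :=
    fun i => recon_right hψrec (hΔu_memB i)
  have hu_mem : ∀ i, u i ∈ E := by
    intro i
    have : u i = ∑ j, counit (R := k) (b j) • x i j := by
      conv_lhs => rw [← rapp_counit (u i), hΔu_form i]
      rw [map_sum]
      exact Finset.sum_congr rfl fun j _ => by rw [rapp_tmul]
    rw [this]
    exact Submodule.sum_mem _ fun j _ => Submodule.smul_mem _ _ (hxE i j)
  have hc_mem : c ∈ E := by
    have : c = ∑ i, counit (R := k) (a i) • u i := by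
      conv_lhs => rw [← lapp_counit c, hΔc_a]
      rw [map_sum]
      exact Finset.sum_congr rfl fun i _ => by rw [lapp_tmul]
    rw [this]
    exact Submodule.sum_mem _ fun i _ => Submodule.smul_mem _ _ (hu_mem i)
  have hΔv_eq : ∀ j, LinearMap.lTensor C (rapp (ψ j) C) t = Δ (v j) := by
    intro j
    conv_lhs => rw [ht_formB]
    rw [map_sum]
    simp only [lTensor_rapp_assoc]
    exact sum_delta_smul j (fun j' => Δ (v j')) (fun j' => ψ j (b j')) (hψδ j)
  have hxv : ∀ i j, x i j = lapp (φ i) C (Δ (v j)) := by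
    intro i j
    rw [← hΔv_eq j, lapp_natural, ← hΔu_t i]
  have hΔv_memA : ∀ j, Δ (v j) ∈ LinearMap.range (LinearMap.rTensor C A.subtype) := by
    intro j
    rw [← hΔv_eq j]
    exact lTensor_mem_range_rTensor _ ht_memA
  have hΔv_form : ∀ j, Δ (v j) = ∑ i, a i ⊗ₜ[k] x i j := by
    intro j
    rw [recon_left hφrec (hΔv_memA j)]
    exact Finset.sum_congr rfl fun i _ => by rw [← hxv i j]
  -- Δ (x i j) ∈ E ⊗ C
  have step10 : ∀ i j, Δ (x i j) ∈ LinearMap.range (LinearMap.rTensor C E.subtype) := by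
    intro i j
    set w : C ⊗[k] (C ⊗[k] C) := LinearMap.lTensor C Δ (Δ (u i)) with hw
    have hw_memE : w ∈ LinearMap.range (LinearMap.rTensor (C ⊗[k] C) E.subtype) := by
      rw [hw, hΔu_form i, map_sum]
      refine Submodule.sum_mem _ fun j' _ => ?_
      rw [LinearMap.lTensor_tmul]
      exact ⟨(⟨x i j', hxE i j'⟩ : E) ⊗ₜ[k] Δ (b j'), rfl⟩
    have hw_form : w = ∑ j', TensorProduct.assoc k C C C (Δ (x i j') ⊗ₜ[k] b j') := by
      have hco : (LinearMap.lTensor C Δ) (Δ (u i)) =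
          TensorProduct.assoc k C C C ((LinearMap.rTensor C Δ) (Δ (u i))) :=
        (Coalgebra.coassoc_apply (u i)).symm
      rw [hw, hco]
      conv_lhs => rw [hΔu_form i]
      rw [map_sum, map_sum]
      exact Finset.sum_congr rfl fun j' _ => by rw [LinearMap.rTensor_tmul]
    have hΔx : LinearMap.lTensor C (rapp (ψ j) C) w = Δ (x i j) := by
      conv_lhs => rw [hw_form]
      rw [map_sum]
      simp only [lTensor_rapp_assoc]
      exact sum_delta_smul j (fun j' => Δ (x i j')) (fun j' => ψ j (b j')) (hψδ j)
    rw [← hΔx]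
    exact lTensor_mem_range_rTensor _ hw_memE
  -- Δ (x i j) ∈ C ⊗ E
  have step11 : ∀ i j, Δ (x i j) ∈ LinearMap.range (LinearMap.lTensor C E.subtype) := by
    intro i j
    set w : C ⊗[k] (C ⊗[k] C) := LinearMap.lTensor C Δ (Δ (v j)) with hw
    have hw_memE : w ∈ LinearMap.range (LinearMap.lTensor C (LinearMap.lTensor C E.subtype)) := by
      have hw_form : w = ∑ i', TensorProduct.assoc k C C C (Δ (a i') ⊗ₜ[k] x i' j) := by
        have hco : (LinearMap.lTensor C Δ) (Δ (v j)) =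
            TensorProduct.assoc k C C C ((LinearMap.rTensor C Δ) (Δ (v j))) :=
          (Coalgebra.coassoc_apply (v j)).symm
        rw [hw, hco]
        conv_lhs => rw [hΔv_form j]
        rw [map_sum, map_sum]
        exact Finset.sum_congr rfl fun i' _ => by rw [LinearMap.rTensor_tmul]
      rw [hw_form]
      exact Submodule.sum_mem _ fun i' _ => assoc_tmul_mem E (Δ (a i')) (hxE i' j)
    have hΔx : lapp (φ i) (C ⊗[k] C) w = Δ (x i j) := by
      rw [hw]
      conv_lhs => rw [hΔv_form j]
      rw [map_sum, map_sum]
      simp only [LinearMap.lTensor_tmul, lapp_tmul]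
      exact sum_delta_smul i (fun i' => Δ (x i' j)) (fun i' => φ i (a i')) (hφδ i)
    obtain ⟨s₀, hs₀⟩ := hw_memE
    rw [← hΔx, ← hs₀, lapp_natural]
    exact ⟨_, rfl⟩
  refine ⟨E, ?_, FiniteDimensional.span_of_finite _ (Set.finite_range _), hc_mem⟩
  intro z hz
  induction hz using Submodule.span_induction with
  | mem z hz =>
    obtain ⟨⟨i, j⟩, rfl⟩ := hz
    exact mem_range_map_of_mem_inter E (step10 i j) (step11 i j)
  | zero => rw [map_zero]; exact zero_mem _
  | add y z _ _ hy hz => rw [map_add]; exact add_mem hy hz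
  | smul r y _ hy => rw [map_smul]; exact Submodule.smul_mem _ _ hy

/-- (Fundamental Theorem of Coalgebras) Every `k`-coalgebra is the directed union of its
finite-dimensional subcoalgebras: every element lies in a finite-dimensional subcoalgebra,
the family of finite-dimensional subcoalgebras is directed under inclusion, and its
supremum is everything. -/
theorem coalgebra_directed_union_of_finiteDimensional_subcoalgebras
    (k C : Type*) [Field k] [AddCommGroup C] [Module k C] [Coalgebra k C] :
    (∀ c : C, ∃ E : Submodule k C, IsSubcoalgebra E ∧ FiniteDimensional k E ∧ c ∈ E) ∧
    (DirectedOn (· ≤ ·) {E : Submodule k C | IsSubcoalgebra E ∧ FiniteDimensional k E}) ∧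
    sSup {E : Submodule k C | IsSubcoalgebra E ∧ FiniteDimensional k E} = ⊤ := by
  have h1 : ∀ c : C, ∃ E : Submodule k C, IsSubcoalgebra E ∧ FiniteDimensional k E ∧ c ∈ E :=
    exists_fd_subcoalgebra
  refine ⟨h1, ?_, ?_⟩
  · rintro E ⟨hE, hEfd⟩ F ⟨hF, hFfd⟩
    refine ⟨E ⊔ F, ⟨?_, ?_⟩, le_sup_left, le_sup_right⟩
    · intro z hz
      rw [Submodule.mem_sup] at hz
      obtain ⟨e, he, f, hf, rfl⟩ := hz
      rw [map_add]
      exact add_mem (FTCAux.range_map_subtype_mono le_sup_left le_sup_left (hE e he))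
        (FTCAux.range_map_subtype_mono le_sup_right le_sup_right (hF f hf))
    · exact Submodule.finiteDimensional_sup E F
  · rw [eq_top_iff]
    rintro z -
    obtain ⟨E, hE1, hE2, hE3⟩ := h1 z
    have hmem : E ∈ {E : Submodule k C | IsSubcoalgebra E ∧ FiniteDimensional k E} :=
      ⟨hE1, hE2⟩
    exact le_sSup hmem hE3
end

section
/- Let A be a commutative finitely generated algebra over a field k. Then A is proper, i.e., the dual coalgebra A^o is dense in A* (equivalently, the natural map A → (A^o)* is injective): for every nonzero a ∈ A there exists an ideal I of finite codimension with a ∉ I. -/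
/-- If `A` is a Noetherian `k`-algebra and `m` an ideal with `A ⧸ m` Noetherian
(i.e. finite dimensional) over `k`, then `A ⧸ mⁿ` is Noetherian over `k`. -/
lemma aux_isNoetherian_quot_pow (k A : Type*) [Field k] [CommRing A] [Algebra k A]
    [IsNoetherianRing A] (m : Ideal A) (hfd : IsNoetherian k (A ⧸ m)) (n : ℕ) :
    IsNoetherian k (A ⧸ m ^ n) := by
  induction n with
  | zero =>
    rw [pow_zero, Ideal.one_eq_top]
    have : Subsingleton (A ⧸ (⊤ : Ideal A)) :=
      Submodule.Quotient.subsingleton_iff.mpr rfl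
    infer_instance
  | succ n ih =>
    set I : Ideal A := m ^ (n + 1) with hI
    set B := A ⧸ I with hB
    have hle : I ≤ m ^ n := Ideal.pow_le_pow_right (Nat.le_succ n)
    set S : Ideal B := (m ^ n).map (Ideal.Quotient.mk I) with hS
    -- the quotient `(B ⧸ S)` is `A ⧸ mⁿ`, Noetherian over `k` by induction
    have hquot : IsNoetherian k (B ⧸ (S.restrictScalars k)) := by
      have e1 : (B ⧸ (S.restrictScalars k)) ≃ₗ[k] (B ⧸ S) :=
        Submodule.Quotient.restrictScalarsEquiv k S
      have e2 : (B ⧸ S) ≃ₗ[k] (A ⧸ m ^ n) := by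
        have := DoubleQuot.quotQuotEquivQuotOfLEₐ k hle
        exact this.toLinearEquiv
      exact isNoetherian_of_linearEquiv (e1.trans e2).symm
    -- `S` itself is Noetherian over `k`
    have hSfin : IsNoetherian k (S.restrictScalars k) := by
      -- `S` is a finitely generated `A`-module
      have hBnoeth : IsNoetherianRing B := inferInstance
      have hfinB : Module.Finite B S := Module.Finite.iff_fg.mpr (IsNoetherian.noetherian S)
      have hfinAB : Module.Finite A B :=
        Module.Finite.of_surjective (Algebra.linearMap A B) Ideal.Quotient.mk_surjective
      have hfinA : Module.Finite A S := Module.Finite.trans B S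
      -- `S` is annihilated by `m`
      have htor : Module.IsTorsionBySet A S (m : Set A) := by
        intro x c
        obtain ⟨b, hb⟩ := x
        ext
        show (c : A) • b = 0
        have hmem : (c : A) • b ∈ (m * m ^ n).map (Ideal.Quotient.mk I) := by
          rw [Ideal.map_mul]
          have hc : (Ideal.Quotient.mk I (c : A)) ∈ m.map (Ideal.Quotient.mk I) :=
            Ideal.mem_map_of_mem _ c.2
          rw [Algebra.smul_def, Ideal.Quotient.algebraMap_eq]
          exact Ideal.mul_mem_mul hc hb
        have : (m * m ^ n).map (Ideal.Quotient.mk I) = ⊥ := by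
          rw [← pow_succ', ← hI, Ideal.map_quotient_self]
        rwa [this, Ideal.mem_bot] at hmem
      letI : Module (A ⧸ m) S := htor.module
      haveI : IsScalarTower A (A ⧸ m) S := htor.isScalarTower
      haveI : IsScalarTower k (A ⧸ m) S := htor.isScalarTower
      haveI hfinAm : Module.Finite (A ⧸ m) S :=
        Module.Finite.of_restrictScalars_finite A (A ⧸ m) S
      haveI hfdk : Module.Finite k (A ⧸ m) := ⟨hfd.noetherian ⊤⟩
      haveI : Module.Finite k S := Module.Finite.trans (A ⧸ m) S
      have : IsNoetherian k S := inferInstance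
      exact isNoetherian_of_linearEquiv
        ((Submodule.restrictScalarsEquiv k B B S).restrictScalars k).symm
    rw [isNoetherian_iff_submodule_quotient (S.restrictScalars k)]
    exact ⟨hSfin, hquot⟩

/-- A commutative finitely generated algebra `A` over a field `k` is proper: its dual
coalgebra `A^o` is dense in `A*`, equivalently the natural map `A → (A^o)*` is injective:
for every nonzero `a ∈ A` there is an ideal `I` of finite codimension with `a ∉ I`. -/
theorem commutative_finiteType_proper (k A : Type*) [Field k] [CommRing A] [Algebra k A]
    (hfg : Algebra.FiniteType k A) (a : A) (ha : a ≠ 0) :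
    ∃ I : Ideal A, FiniteDimensional k (A ⧸ I) ∧ a ∉ I := by
  haveI : Algebra.FiniteType k A := hfg
  haveI hNoeth : IsNoetherianRing A := Algebra.FiniteType.isNoetherianRing k A
  -- the annihilator of `a` is a proper ideal
  obtain ⟨m, hmmax, hJm⟩ := Ideal.exists_le_maximal (Ideal.torsionOf A A a)
    (fun h => ha (by simpa using (Ideal.torsionOf_eq_top_iff A a).mp h))
  haveI : m.IsMaximal := hmmax
  -- localize at `m`
  set Am := Localization.AtPrime m with hAm
  haveI : IsNoetherianRing Am := IsLocalization.isNoetherianRing m.primeCompl Am hNoeth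
  have hx0 : algebraMap A Am a ≠ 0 := by
    intro h
    obtain ⟨⟨s, hs⟩, hsa⟩ := (IsLocalization.map_eq_zero_iff m.primeCompl Am a).mp h
    exact hs (hJm (by simpa [Ideal.mem_torsionOf_iff, mul_comm] using hsa))
  -- Krull intersection theorem in the Noetherian local ring `Am`
  have hKrull := Ideal.iInf_pow_eq_bot_of_isLocalRing (IsLocalRing.maximalIdeal Am)
    (Ideal.IsMaximal.ne_top (IsLocalRing.maximalIdeal.isMaximal Am))
  have : ∃ n : ℕ, algebraMap A Am a ∉ (IsLocalRing.maximalIdeal Am) ^ n := by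
    by_contra h
    push_neg at h
    apply hx0
    have hmem : algebraMap A Am a ∈ ⨅ i : ℕ, (IsLocalRing.maximalIdeal Am) ^ i :=
      (Submodule.mem_iInf _).mpr h
    rwa [hKrull, Ideal.mem_bot] at hmem
  obtain ⟨n, hn⟩ := this
  refine ⟨m ^ n, ?_, ?_⟩
  · -- finite dimensionality of `A ⧸ mⁿ`
    have hquotfd : IsNoetherian k (A ⧸ m) := by
      haveI : Algebra.FiniteType k (A ⧸ m) :=
        Algebra.FiniteType.of_surjective (Ideal.Quotient.mkₐ k m)
          Ideal.Quotient.mk_surjective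
      haveI : Module.Finite k (A ⧸ m) :=
        @finite_of_finite_type_of_isJacobsonRing k (A ⧸ m) _ (Ideal.Quotient.field m)
          (Ideal.Quotient.algebra k) inferInstance inferInstance
      infer_instance
    exact ⟨(aux_isNoetherian_quot_pow k A m hquotfd n).noetherian ⊤⟩
  · -- `a ∉ mⁿ`
    intro hmem
    apply hn
    have : algebraMap A Am a ∈ (m ^ n).map (algebraMap A Am) :=
      Ideal.mem_map_of_mem _ hmem
    rwa [Ideal.map_pow, Localization.AtPrime.map_eq_maximalIdeal] at this
end
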